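/- Let Z be a standard normal random variable, a > 0, b ≥ 0. Then E[a²·cos(bZ)/(a²+Z²)] = a·√(2π)·e^{a²/2}·(cosh(ab) − (1/2)(e^{−ab}Φ(a−b) + e^{ab}Φ(a+b))), where Φ is the standard normal CDF. -/

import Mathlib

open MeasureTheory ProbabilityTheory Real

/-- Standard normal cumulative distribution function. -/
noncomputable def stdNormalCDF (x : ℝ) : ℝ :=
  ∫ u in Set.Iic x, Real.exp (-u ^ 2 / 2) / Real.sqrt (2 * Real.pi)

open Set Filter
open scoped ENNReal NNReal

private lemma gauss_cos (t : ℝ) :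
    ∫ x : ℝ, Real.exp (-x ^ 2 / 2) * Real.cos (t * x)
      = Real.sqrt (2 * π) * Real.exp (-t ^ 2 / 2) := by
  have h := fourierIntegral_gaussian (b := (1/2 : ℂ)) (by norm_num) (t : ℂ)
  have hint : Integrable (fun x : ℝ ↦ Complex.exp (Complex.I * t * x) *
      Complex.exp (-(1/2 : ℂ) * x ^ 2)) := by
    have h0 := integrable_cexp_quadratic (b := (1/2 : ℂ)) (by norm_num) (Complex.I * t) 0
    have he : (fun x : ℝ ↦ Complex.exp (-(1/2:ℂ) * x ^ 2 + Complex.I * t * x + 0))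
        = fun x : ℝ ↦ Complex.exp (Complex.I * t * x) * Complex.exp (-(1/2 : ℂ) * x ^ 2) := by
      funext x; rw [← Complex.exp_add]; ring_nf
    rwa [he] at h0
  have hre := integral_re hint
  rw [h] at hre
  simp only [RCLike.re_to_complex] at hre
  have hL : ∀ x : ℝ, (Complex.exp (Complex.I * t * x) *
      Complex.exp (-(1/2 : ℂ) * x ^ 2)).re = Real.exp (-x ^ 2 / 2) * Real.cos (t * x) := by
    intro x
    have h1 : Complex.exp (-(1/2 : ℂ) * x ^ 2) = (Real.exp (-x ^ 2 / 2) : ℂ) := by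
      rw [Complex.ofReal_exp]; congr 1; push_cast; ring
    have h2 : Complex.I * t * x = ((t * x : ℝ) : ℂ) * Complex.I := by push_cast; ring
    rw [h1, h2, Complex.exp_mul_I, ← Complex.ofReal_cos, ← Complex.ofReal_sin]
    have : ((Real.cos (t*x) : ℂ) + (Real.sin (t*x) : ℂ) * Complex.I) * (Real.exp (-x ^ 2 / 2) : ℂ)
        = ((Real.exp (-x ^ 2 / 2) * Real.cos (t*x) : ℝ) : ℂ)
          + ((Real.sin (t*x) * Real.exp (-x ^ 2 / 2) : ℝ) : ℂ) * Complex.I := by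
      push_cast; ring
    rw [this]
    simp only [Complex.add_re, Complex.mul_re, Complex.I_re, Complex.I_im,
      Complex.ofReal_re, Complex.ofReal_im]
    ring
  have hR : ((↑π / (1/2 : ℂ)) ^ (1 / 2 : ℂ) * Complex.exp (-(t:ℂ) ^ 2 / (4 * (1/2)))).re
      = Real.sqrt (2 * π) * Real.exp (-t ^ 2 / 2) := by
    have h1 : (↑π / (1/2 : ℂ)) = ((2 * π : ℝ) : ℂ) := by push_cast; ring
    have h2 : ((2 * π : ℝ) : ℂ) ^ (1 / 2 : ℂ) = ((Real.sqrt (2 * π) : ℝ) : ℂ) := by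
      rw [show ((1/2 : ℂ)) = ((1/2 : ℝ) : ℂ) by norm_num,
        ← Complex.ofReal_cpow (by positivity)]
      norm_cast
      rw [Real.sqrt_eq_rpow]
    have h3 : Complex.exp (-(t:ℂ) ^ 2 / (4 * (1/2))) = ((Real.exp (-t ^ 2 / 2) : ℝ) : ℂ) := by
      rw [Complex.ofReal_exp]; congr 1; push_cast; ring
    rw [h1, h2, h3, ← Complex.ofReal_mul, Complex.ofReal_re]
  calc ∫ x : ℝ, Real.exp (-x ^ 2 / 2) * Real.cos (t * x)
      = ∫ x : ℝ, (Complex.exp (Complex.I * t * x) * Complex.exp (-(1/2 : ℂ) * x ^ 2)).re := by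
        exact (integral_congr_ae (ae_of_all _ fun x ↦ (hL x).symm))
    _ = _ := by rw [hre, hR]

private lemma integrableOn_exp_cos {a : ℝ} (ha : 0 < a) (z b : ℝ) :
    IntegrableOn (fun s ↦ Real.exp (-(a * s)) * Real.cos (s * z + b)) (Set.Ioi 0) := by
  refine (Integrable.mono (g := fun s ↦ Real.exp (-a * s))
    (exp_neg_integrableOn_Ioi 0 ha)
    ((Continuous.mul (by continuity) (by continuity)).aestronglyMeasurable) ?_)
  filter_upwards with s
  rw [Real.norm_eq_abs, Real.norm_eq_abs, abs_mul, abs_exp, abs_exp, neg_mul]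
  nlinarith [abs_cos_le_one (s * z + b), abs_nonneg (Real.cos (s * z + b)), Real.exp_pos (-(a*s))]

private lemma laplace_cos {a : ℝ} (ha : 0 < a) (z : ℝ) :
    ∫ s in Set.Ioi (0:ℝ), Real.exp (-(a * s)) * Real.cos (s * z)
      = a / (a ^ 2 + z ^ 2) := by
  have hD : (0:ℝ) < a ^ 2 + z ^ 2 := by positivity
  set F : ℝ → ℝ := fun s ↦ Real.exp (-(a * s)) * (z * Real.sin (s * z) - a * Real.cos (s * z))
      / (a ^ 2 + z ^ 2) with hF
  have hderiv : ∀ s ∈ Set.Ici (0:ℝ), HasDerivAt F (Real.exp (-(a * s)) * Real.cos (s * z)) s := by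
    intro s _
    have h1 : HasDerivAt (fun s : ℝ ↦ Real.exp (-(a * s))) (-a * Real.exp (-(a * s))) s := by
      have := (Real.hasDerivAt_exp (-(a * s))).comp s (by
        simpa using ((hasDerivAt_id s).const_mul (-a)))
      simpa [mul_comm, Function.comp_def] using this
    have h2 : HasDerivAt (fun s : ℝ ↦ z * Real.sin (s * z) - a * Real.cos (s * z))
        (z * (z * Real.cos (s * z)) - a * (-z * Real.sin (s * z))) s := by
      have hs : HasDerivAt (fun s : ℝ ↦ Real.sin (s * z)) (Real.cos (s * z) * z) s := by
        have := (Real.hasDerivAt_sin (s * z)).comp s ((hasDerivAt_mul_const z))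
        simpa [Function.comp_def] using this
      have hc : HasDerivAt (fun s : ℝ ↦ Real.cos (s * z)) (-Real.sin (s * z) * z) s := by
        have := (Real.hasDerivAt_cos (s * z)).comp s ((hasDerivAt_mul_const z))
        simpa [Function.comp_def] using this
      have := ((hs.const_mul z).sub (hc.const_mul a))
      refine this.congr_deriv ?_; ring
    have := ((h1.mul h2).div_const (a ^ 2 + z ^ 2))
    refine this.congr_deriv ?_
    field_simp
    ring
  have htend : Tendsto F atTop (nhds 0) := by
    apply squeeze_zero_norm (a := fun s ↦ Real.exp (-(a * s)) * ((|z| + a) / (a ^ 2 + z ^ 2)))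
    · intro s
      rw [hF]
      rw [norm_div, Real.norm_eq_abs, Real.norm_eq_abs, abs_of_pos hD, div_le_iff₀ hD]
      have heq : Real.exp (-(a * s)) * ((|z| + a) / (a ^ 2 + z ^ 2)) * (a ^ 2 + z ^ 2)
          = Real.exp (-(a * s)) * (|z| + a) := by field_simp
      rw [heq, abs_mul, abs_exp]
      have h1 : |z * Real.sin (s * z) - a * Real.cos (s * z)| ≤ |z| + a := by
        calc |z * Real.sin (s * z) - a * Real.cos (s * z)|
            ≤ |z * Real.sin (s * z)| + |a * Real.cos (s * z)| := abs_sub _ _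
          _ ≤ |z| + a := by
              rw [abs_mul, abs_mul, abs_of_pos ha]
              have := abs_sin_le_one (s * z); have := abs_cos_le_one (s * z)
              nlinarith [abs_nonneg z]
      exact mul_le_mul_of_nonneg_left h1 (Real.exp_pos _).le
    · rw [show (0:ℝ) = 0 * ((|z| + a) / (a ^ 2 + z ^ 2)) by ring]
      apply Tendsto.mul_const
      have : Tendsto (fun s : ℝ ↦ a * s) atTop atTop :=
        Tendsto.const_mul_atTop ha tendsto_id
      exact Real.tendsto_exp_neg_atTop_nhds_zero.comp this
  have := integral_Ioi_of_hasDerivAt_of_tendsto' hderiv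
    (by simpa using integrableOn_exp_cos ha z 0) htend
  rw [this, hF]
  simp
  field_simp

private lemma gauss_expectation (g : ℝ → ℝ) :
    ∫ z, g z ∂(gaussianReal 0 1) = ∫ z, (Real.sqrt (2 * π))⁻¹ * (Real.exp (-z ^ 2 / 2) * g z) := by
  rw [gaussianReal_of_var_ne_zero 0 one_ne_zero]
  have : (gaussianPDF 0 1) = fun x ↦ ((gaussianPDFReal 0 1 x).toNNReal : ℝ≥0∞) := by
    funext x; rfl
  rw [this, integral_withDensity_eq_integral_smul
    ((measurable_gaussianPDFReal 0 1).real_toNNReal) g]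
  congr 1
  funext z
  rw [NNReal.smul_def, Real.coe_toNNReal _ (gaussianPDFReal_nonneg 0 1 z), smul_eq_mul]
  rw [gaussianPDFReal]
  push_cast
  norm_num [mul_assoc]

private lemma integrable_gauss_half : Integrable (fun u : ℝ ↦ Real.exp (-u ^ 2 / 2)) := by
  have := integrable_exp_neg_mul_sq (b := (1/2:ℝ)) (by norm_num)
  refine this.congr ?_
  filter_upwards with x; congr 1; ring

private lemma integral_gauss_half : ∫ u : ℝ, Real.exp (-u ^ 2 / 2) = Real.sqrt (2 * π) := by
  have := integral_gaussian (1/2)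
  have he : ∀ u : ℝ, Real.exp (-(1/2) * u ^ 2) = Real.exp (-u ^ 2 / 2) := by
    intro u; congr 1; ring
  simp_rw [he] at this
  rw [this]; congr 1; ring

private lemma stdNormalCDF_eq (x : ℝ) :
    ∫ u in Set.Iic x, Real.exp (-u ^ 2 / 2) = Real.sqrt (2 * π) * stdNormalCDF x := by
  have h : (0:ℝ) < Real.sqrt (2 * π) := Real.sqrt_pos.mpr (by positivity)
  rw [stdNormalCDF, integral_div]
  field_simp

private lemma shifted_integral {a : ℝ} (ha : 0 < a) (c : ℝ) :
    ∫ s in Set.Ioi (0:ℝ), Real.exp (-(a * s)) * Real.exp (-(s + c) ^ 2 / 2)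
      = Real.exp (a ^ 2 / 2 + a * c) *
        (Real.sqrt (2 * π) - Real.sqrt (2 * π) * stdNormalCDF (a + c)) := by
  have hpt : ∀ s : ℝ, Real.exp (-(a * s)) * Real.exp (-(s + c) ^ 2 / 2)
      = Real.exp (a ^ 2 / 2 + a * c) * Real.exp (-(s + (a + c)) ^ 2 / 2) := by
    intro s; rw [← Real.exp_add, ← Real.exp_add]; congr 1; ring
  simp_rw [hpt]
  rw [integral_const_mul]
  congr 1
  have hmp : MeasurePreserving (fun s : ℝ ↦ s + (a + c)) volume volume :=
    measurePreserving_add_right volume (a + c)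
  have hemb : MeasurableEmbedding (fun s : ℝ ↦ s + (a + c)) :=
    (Homeomorph.addRight (a + c)).measurableEmbedding
  have hpre : (fun s : ℝ ↦ s + (a + c)) ⁻¹' (Set.Ioi (a + c)) = Set.Ioi 0 := by
    ext s; simp
  have := hmp.setIntegral_preimage_emb hemb (fun u ↦ Real.exp (-u ^ 2 / 2)) (Set.Ioi (a + c))
  rw [hpre] at this
  rw [this]
  have hsplit := intervalIntegral.integral_Iic_add_Ioi (b := a + c)
    (integrable_gauss_half.integrableOn) (integrable_gauss_half.integrableOn)
  rw [integral_gauss_half, stdNormalCDF_eq] at hsplit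
  linarith [hsplit]

private lemma integrable_gauss_cos (t : ℝ) :
    Integrable (fun x : ℝ ↦ Real.exp (-x ^ 2 / 2) * Real.cos (t * x)) := by
  refine integrable_gauss_half.mono ((by continuity : Continuous fun x : ℝ ↦
    Real.exp (-x ^ 2 / 2) * Real.cos (t * x)).aestronglyMeasurable) ?_
  filter_upwards with x
  rw [Real.norm_eq_abs, Real.norm_eq_abs, abs_mul, abs_exp]
  nlinarith [abs_cos_le_one (t * x), abs_nonneg (Real.cos (t * x)), Real.exp_pos (-x ^ 2 / 2)]

private lemma integrableOn_exp_shift {a : ℝ} (ha : 0 < a) (c : ℝ) :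
    IntegrableOn (fun s ↦ Real.exp (-(a * s)) * Real.exp (-(s + c) ^ 2 / 2)) (Set.Ioi 0) := by
  refine (Integrable.mono (g := fun s ↦ Real.exp (-a * s))
    (exp_neg_integrableOn_Ioi 0 ha)
    ((Continuous.mul (by continuity) (by continuity)).aestronglyMeasurable) ?_)
  filter_upwards with s
  rw [Real.norm_eq_abs, Real.norm_eq_abs, abs_mul, abs_exp, abs_exp, abs_exp, neg_mul]
  have h1 : Real.exp (-(s + c) ^ 2 / 2) ≤ 1 := by
    rw [Real.exp_le_one_iff]
    nlinarith [sq_nonneg (s + c)]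
  nlinarith [Real.exp_pos (-(a*s))]

theorem normal_expectation_cos (a b : ℝ) (ha : 0 < a) (hb : 0 ≤ b) :
    ∫ z, a ^ 2 * Real.cos (b * z) / (a ^ 2 + z ^ 2) ∂(gaussianReal 0 1) =
      a * Real.sqrt (2 * Real.pi) * Real.exp (a ^ 2 / 2) *
        (Real.cosh (a * b) -
          (1 / 2) * (Real.exp (-(a * b)) * stdNormalCDF (a - b) +
            Real.exp (a * b) * stdNormalCDF (a + b))) := by
  have hs2π : (0:ℝ) < Real.sqrt (2 * π) := Real.sqrt_pos.mpr (by positivity)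
  set F : ℝ → ℝ → ℝ := fun z s ↦
    a * (Real.exp (-z ^ 2 / 2) * Real.cos (b * z)) * (Real.exp (-(a * s)) * Real.cos (s * z))
    with hFdef
  have h1 : ∀ z : ℝ, Real.exp (-z ^ 2 / 2) * (a ^ 2 * Real.cos (b * z) / (a ^ 2 + z ^ 2))
      = ∫ s in Set.Ioi (0:ℝ), F z s := by
    intro z
    have hD : (0:ℝ) < a ^ 2 + z ^ 2 := by positivity
    rw [hFdef]
    simp only
    rw [integral_const_mul, laplace_cos ha z]
    field_simp
  have hswap : ∫ z : ℝ, ∫ s in Set.Ioi (0:ℝ), F z s = ∫ s in Set.Ioi (0:ℝ), ∫ z : ℝ, F z s := by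
    apply integral_integral_swap
    have hg1 : Integrable (fun z : ℝ ↦ a * Real.exp (-z ^ 2 / 2)) :=
      integrable_gauss_half.const_mul a
    have hg2 : Integrable (fun s : ℝ ↦ Real.exp (-(a * s))) (volume.restrict (Set.Ioi 0)) := by
      have h0 := exp_neg_integrableOn_Ioi 0 ha
      refine h0.congr ?_
      filter_upwards with s; congr 1; ring
    have hg := hg1.mul_prod hg2
    refine hg.mono ?_ ?_
    · have hc : Continuous (Function.uncurry F) := by
        rw [hFdef]
        apply Continuous.mul
        · apply Continuous.mul continuous_const
          exact (((continuous_fst.pow 2).neg.div_const 2).rexp).mul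
            (Real.continuous_cos.comp (continuous_const.mul continuous_fst))
        · exact (((continuous_const.mul continuous_snd).neg).rexp).mul
            (Real.continuous_cos.comp (continuous_snd.mul continuous_fst))
      exact hc.aestronglyMeasurable
    · filter_upwards with p
      show ‖F p.1 p.2‖ ≤ ‖a * Real.exp (-p.1 ^ 2 / 2) * Real.exp (-(a * p.2))‖
      rw [hFdef]
      simp only
      rw [Real.norm_eq_abs, Real.norm_eq_abs,
        abs_of_pos (by positivity : (0:ℝ) < a * Real.exp (-p.1 ^ 2 / 2) * Real.exp (-(a * p.2))),
        abs_mul, abs_mul, abs_mul, abs_mul, abs_exp, abs_exp, abs_of_pos ha]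
      have e1 := Real.exp_pos (-p.1 ^ 2 / 2)
      have e2 := Real.exp_pos (-(a * p.2))
      have c1 := abs_cos_le_one (b * p.1)
      have c2 := abs_cos_le_one (p.2 * p.1)
      have c1n := abs_nonneg (Real.cos (b * p.1))
      have c2n := abs_nonneg (Real.cos (p.2 * p.1))
      calc a * (Real.exp (-p.1 ^ 2 / 2) * |Real.cos (b * p.1)|)
            * (Real.exp (-(a * p.2)) * |Real.cos (p.2 * p.1)|)
          ≤ a * (Real.exp (-p.1 ^ 2 / 2) * 1) * (Real.exp (-(a * p.2)) * 1) := by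
            apply mul_le_mul
            · exact mul_le_mul le_rfl (by nlinarith) (by positivity) (by positivity)
            · exact mul_le_mul le_rfl c2 c2n (by positivity)
            · positivity
            · positivity
        _ = a * Real.exp (-p.1 ^ 2 / 2) * Real.exp (-(a * p.2)) := by ring
  have h3 : ∀ s : ℝ, ∫ z : ℝ, F z s
      = (a * Real.sqrt (2 * π) / 2) * (Real.exp (-(a * s)) * Real.exp (-(s + b) ^ 2 / 2)
          + Real.exp (-(a * s)) * Real.exp (-(s + -b) ^ 2 / 2)) := by
    intro s
    have hpt : ∀ z : ℝ, F z s = (a * Real.exp (-(a * s))) * ((1/2) *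
        (Real.exp (-z ^ 2 / 2) * Real.cos ((s + b) * z)
          + Real.exp (-z ^ 2 / 2) * Real.cos ((s + -b) * z))) := by
      intro z
      rw [hFdef]
      simp only
      rw [show (s + b) * z = s * z + b * z by ring, show (s + -b) * z = s * z - b * z by ring,
        Real.cos_add, Real.cos_sub]
      ring
    simp_rw [hpt]
    rw [integral_const_mul, integral_const_mul,
      integral_add (integrable_gauss_cos (s + b)) (integrable_gauss_cos (s + -b)),
      gauss_cos, gauss_cos]
    ring
  have h4 : ∫ s in Set.Ioi (0:ℝ), ((a * Real.sqrt (2 * π) / 2) *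
        (Real.exp (-(a * s)) * Real.exp (-(s + b) ^ 2 / 2)
          + Real.exp (-(a * s)) * Real.exp (-(s + -b) ^ 2 / 2)))
      = (a * Real.sqrt (2 * π) / 2) *
        ((Real.exp (a ^ 2 / 2 + a * b) *
            (Real.sqrt (2 * π) - Real.sqrt (2 * π) * stdNormalCDF (a + b)))
          + (Real.exp (a ^ 2 / 2 + a * -b) *
            (Real.sqrt (2 * π) - Real.sqrt (2 * π) * stdNormalCDF (a + -b)))) := by
    rw [integral_const_mul,
      integral_add (integrableOn_exp_shift ha b) (integrableOn_exp_shift ha (-b)),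
      shifted_integral ha b, shifted_integral ha (-b)]
  calc ∫ z, a ^ 2 * Real.cos (b * z) / (a ^ 2 + z ^ 2) ∂(gaussianReal 0 1)
      = ∫ z, (Real.sqrt (2 * π))⁻¹ *
          (Real.exp (-z ^ 2 / 2) * (a ^ 2 * Real.cos (b * z) / (a ^ 2 + z ^ 2))) :=
        gauss_expectation _
    _ = (Real.sqrt (2 * π))⁻¹ *
          ∫ z, Real.exp (-z ^ 2 / 2) * (a ^ 2 * Real.cos (b * z) / (a ^ 2 + z ^ 2)) :=
        integral_const_mul _ _
    _ = (Real.sqrt (2 * π))⁻¹ * ∫ z : ℝ, ∫ s in Set.Ioi (0:ℝ), F z s := by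
        congr 1
        exact integral_congr_ae (ae_of_all _ fun z ↦ h1 z)
    _ = (Real.sqrt (2 * π))⁻¹ * ∫ s in Set.Ioi (0:ℝ), ∫ z : ℝ, F z s := by rw [hswap]
    _ = (Real.sqrt (2 * π))⁻¹ * ∫ s in Set.Ioi (0:ℝ), ((a * Real.sqrt (2 * π) / 2) *
          (Real.exp (-(a * s)) * Real.exp (-(s + b) ^ 2 / 2)
            + Real.exp (-(a * s)) * Real.exp (-(s + -b) ^ 2 / 2))) := by
        congr 1
        exact integral_congr_ae (ae_of_all _ fun s ↦ h3 s)
    _ = (Real.sqrt (2 * π))⁻¹ * ((a * Real.sqrt (2 * π) / 2) *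
          ((Real.exp (a ^ 2 / 2 + a * b) *
              (Real.sqrt (2 * π) - Real.sqrt (2 * π) * stdNormalCDF (a + b)))
            + (Real.exp (a ^ 2 / 2 + a * -b) *
              (Real.sqrt (2 * π) - Real.sqrt (2 * π) * stdNormalCDF (a + -b))))) := by
        rw [h4]
    _ = _ := by
        rw [Real.cosh_eq, Real.exp_add, Real.exp_add,
          show a + -b = a - b by ring, show a * -b = -(a * b) by ring]
        field_simp
        ring
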